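/- Let g ≥ 1, let e_1, …, e_{2g+2} ∈ ℂ, let f(x) = ∏_{m=1}^{2g+2}(x − e_m) = ∑_{k=0}^{2g+2} λ_k x^k, and for each (g+1)-element subset S of {1,…,2g+2} let Λ^{[S]} be the unique symmetric g×g complex matrix with P_S(x)P_{S^c}(z) + P_S(z)P_{S^c}(x) − F(x,z) = (x−z)² ∑_{i,j=1}^{g} Λ^{[S]}_{ij} x^{i−1} z^{j−1}. Then for every x ∈ ℂ: ∑_S ∑_{i,j=1}^{g} Λ^{[S]}_{ij} x^{i+j−2} = 2 ∑_{k=2}^{2g} Σ_{g;k} λ_k x^{k−2}, where Σ_{g;k} = (C(2g+1,g)/(4g+2))·( k(2g+2−k)/2 + ((2g+1)/4)((−1)^k − 1) ). Equivalently, for each k with 2 ≤ k ≤ 2g, the (k−1)-th anti-diagonal sum ∑_{i+j=k} (Λ_g)_{ij} of the matrix Λ_g := (1/2) ∑_S Λ^{[S]} equals Σ_{g;k} λ_k. -/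

import Mathlib

open Finset Polynomial

lemma derivative_finset_prod {ι : Type*} [DecidableEq ι] (s : Finset ι) (f : ι → Polynomial ℂ) :
    derivative (∏ i ∈ s, f i) = ∑ i ∈ s, (∏ j ∈ s.erase i, f j) * derivative (f i) := by
  induction s using Finset.induction_on with
  | empty => simp
  | @insert a s ha ih =>
    rw [Finset.prod_insert ha, derivative_mul, ih, Finset.sum_insert ha, Finset.mul_sum]
    rw [Finset.erase_insert ha]
    congr 1
    · ring
    · apply Finset.sum_congr rfl
      intro b hb
      rw [Finset.erase_insert_of_ne (by rintro rfl; exact ha hb)]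
      rw [Finset.prod_insert (by simp [ha, Finset.mem_erase])]
      ring

lemma eval_d2_prod {ι : Type*} [DecidableEq ι] (e : ι → ℂ) (T : Finset ι) (x : ℂ) :
    (derivative (derivative (∏ i ∈ T, (X - C (e i))))).eval x
      = ∑ a ∈ T, ∑ b ∈ T.erase a, ∏ k ∈ (T.erase a).erase b, (x - e k) := by
  rw [derivative_finset_prod]
  simp only [derivative_sub, derivative_X, derivative_C, sub_zero, mul_one]
  rw [derivative_sum]
  simp only [derivative_finset_prod, derivative_sub, derivative_X, derivative_C, sub_zero,
    mul_one]
  simp [eval_finset_sum, eval_prod]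


lemma swap_count {ι : Type*} [Fintype ι] [DecidableEq ι] (e : ι → ℂ) (x : ℂ) (m : ℕ) :
    ∑ S ∈ powersetCard m (univ : Finset ι), (∏ i ∈ S, (x - e i)) *
        ∑ a ∈ Sᶜ, ∑ b ∈ Sᶜ.erase a, ∏ k ∈ (Sᶜ.erase a).erase b, (x - e k)
    = (Nat.choose (Fintype.card ι - 2) m : ℂ) *
        ∑ a, ∑ b ∈ (univ : Finset ι).erase a,
          ∏ k ∈ (((univ : Finset ι).erase a).erase b), (x - e k) := by
  set h : ι → ι → ℂ := fun a b => ∏ k ∈ (((univ : Finset ι).erase a).erase b), (x - e k) with hh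
  have step1 : ∀ S ∈ powersetCard m (univ : Finset ι),
      (∏ i ∈ S, (x - e i)) *
        ∑ a ∈ Sᶜ, ∑ b ∈ Sᶜ.erase a, ∏ k ∈ (Sᶜ.erase a).erase b, (x - e k)
      = ∑ a, ∑ b ∈ (univ : Finset ι).erase a,
          (if a ∈ Sᶜ ∧ b ∈ Sᶜ then h a b else 0) := by
    intro S hS
    rw [Finset.mul_sum]
    have key : ∀ a ∈ Sᶜ, (∏ i ∈ S, (x - e i)) *
        (∑ b ∈ Sᶜ.erase a, ∏ k ∈ (Sᶜ.erase a).erase b, (x - e k))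
        = ∑ b ∈ Sᶜ.erase a, h a b := by
      intro a ha
      rw [Finset.mul_sum]
      apply Finset.sum_congr rfl
      intro b hb
      rw [hh]
      have hdisj : Disjoint S ((Sᶜ.erase a).erase b) := by
        apply Finset.disjoint_left.mpr
        intro k hk hk2
        simp only [Finset.mem_erase, Finset.mem_compl] at hk2
        exact hk2.2.2 hk
      rw [← Finset.prod_union hdisj]
      congr 1
      ext k
      simp only [Finset.mem_union, Finset.mem_erase, Finset.mem_compl] at *
      by_cases hkS : k ∈ S
      · simp only [hkS, true_or, true_iff]
        refine ⟨?_, ?_, Finset.mem_univ k⟩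
        · rintro rfl; exact hb.2 hkS
        · rintro rfl; exact ha hkS
        
      · simp [hkS]
    rw [Finset.sum_congr rfl key]
    have extb : ∀ a ∈ Sᶜ, ∑ b ∈ Sᶜ.erase a, h a b
        = ∑ b ∈ (univ : Finset ι).erase a, (if b ∈ Sᶜ then h a b else 0) := by
      intro a _
      rw [Finset.sum_ite_mem]
      congr 1
      ext b
      simp only [Finset.mem_inter, Finset.mem_erase, Finset.mem_univ, true_and, Finset.mem_compl]
      tauto
    rw [Finset.sum_congr rfl extb]
    symm
    calc ∑ a : ι, ∑ b ∈ (univ : Finset ι).erase a, (if a ∈ Sᶜ ∧ b ∈ Sᶜ then h a b else 0)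
        = ∑ a : ι, (if a ∈ Sᶜ then
            ∑ b ∈ (univ : Finset ι).erase a, (if b ∈ Sᶜ then h a b else 0) else 0) := by
          apply Finset.sum_congr rfl
          intro a _
          by_cases haS : a ∈ Sᶜ
          · simp [haS]
          · simp [haS]
      _ = ∑ a ∈ (univ : Finset ι) ∩ Sᶜ,
            ∑ b ∈ (univ : Finset ι).erase a, (if b ∈ Sᶜ then h a b else 0) :=
          Finset.sum_ite_mem _ _ _
      _ = ∑ a ∈ Sᶜ, ∑ b ∈ (univ : Finset ι).erase a, (if b ∈ Sᶜ then h a b else 0) := by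
          rw [Finset.univ_inter]

  rw [Finset.sum_congr rfl step1, Finset.sum_comm]
  rw [Finset.mul_sum]
  apply Finset.sum_congr rfl
  intro a _
  rw [Finset.sum_comm, Finset.mul_sum]
  apply Finset.sum_congr rfl
  intro b hb
  have hba : b ≠ a := (Finset.mem_erase.mp hb).1
  have count : (Finset.powersetCard m (univ : Finset ι)).filter
      (fun S => a ∈ Sᶜ ∧ b ∈ Sᶜ) = Finset.powersetCard m (((univ : Finset ι).erase a).erase b) := by
    ext S
    simp only [Finset.mem_filter, Finset.mem_powersetCard, Finset.mem_compl, Finset.subset_iff,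
      Finset.mem_erase, Finset.mem_univ, and_true]
    constructor
    · rintro ⟨⟨-, hcard⟩, haS, hbS⟩
      refine ⟨fun k hk => ⟨?_, ?_⟩, hcard⟩
      · rintro rfl; exact hbS hk
      · rintro rfl; exact haS hk
    · rintro ⟨hsub, hcard⟩
      refine ⟨⟨fun k _ => trivial, hcard⟩, ?_, ?_⟩
      · intro h'; exact (hsub h').2 rfl
      · intro h'; exact (hsub h').1 rfl
  calc ∑ S ∈ powersetCard m (univ : Finset ι), (if a ∈ Sᶜ ∧ b ∈ Sᶜ then h a b else 0)
      = ∑ S ∈ (Finset.powersetCard m (univ : Finset ι)).filter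
          (fun S => a ∈ Sᶜ ∧ b ∈ Sᶜ), h a b := (Finset.sum_filter _ _).symm
    _ = (Nat.choose (Fintype.card ι - 2) m : ℂ) * h a b := by
        rw [count, Finset.sum_const, Finset.card_powersetCard, nsmul_eq_mul]
        congr 2
        rw [Finset.card_erase_of_mem (by simp [hba]), Finset.card_erase_of_mem (by simp),
          Finset.card_univ, Nat.sub_sub]

lemma sum_range_parity {M : Type*} [AddCommMonoid M] (n : ℕ) (h : ℕ → M) :
    ∑ k ∈ range (2 * n + 1), h k
      = ∑ m ∈ range (n + 1), h (2 * m) + ∑ m ∈ range n, h (2 * m + 1) := by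
  induction n with
  | zero => simp
  | succ n ih =>
    have e : 2 * (n + 1) + 1 = (2 * n + 1) + 1 + 1 := by ring
    rw [e, Finset.sum_range_succ, Finset.sum_range_succ, ih,
      Finset.sum_range_succ (fun m => h (2 * m)) (n + 1),
      Finset.sum_range_succ (fun m => h (2 * m + 1)) n,
      show 2 * n + 1 + 1 = 2 * (n + 1) from by ring]
    abel

lemma d2_C_mul_X_pow (a : ℂ) (k : ℕ) :
    Polynomial.derivative (Polynomial.derivative (C a * X ^ k))
      = C (a * (k : ℂ) * ((k - 1 : ℕ) : ℂ)) * X ^ (k - 1 - 1) := by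
  rw [derivative_C_mul, derivative_X_pow, ← mul_assoc, ← map_mul, derivative_C_mul,
    derivative_X_pow, ← mul_assoc, ← map_mul]

lemma choose_id1 (g : ℕ) :
    (2 * g + 1) * Nat.choose (2 * g) (g + 1) = g * Nat.choose (2 * g + 1) g := by
  have h1 : Nat.choose (2 * g) (g + 1) * (g + 1) = Nat.choose (2 * g) g * g := by
    have := Nat.choose_succ_right_eq (2 * g) g
    simpa [show 2 * g - g = g from by omega] using this
  have h2 : (2 * g + 1) * Nat.choose (2 * g) g = Nat.choose (2 * g + 1) (g + 1) * (g + 1) := by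
    simpa using Nat.add_one_mul_choose_eq (2 * g) g
  have h3 : Nat.choose (2 * g + 1) (g + 1) = Nat.choose (2 * g + 1) g := by
    have := Nat.choose_symm (show g ≤ 2 * g + 1 from by omega)
    simpa [show 2 * g + 1 - g = g + 1 from by omega] using this
  have key : ((2 * g + 1) * Nat.choose (2 * g) (g + 1)) * (g + 1)
      = (g * Nat.choose (2 * g + 1) g) * (g + 1) := by
    calc ((2 * g + 1) * Nat.choose (2 * g) (g + 1)) * (g + 1)
        = (2 * g + 1) * (Nat.choose (2 * g) (g + 1) * (g + 1)) := by ring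
      _ = (2 * g + 1) * (Nat.choose (2 * g) g * g) := by rw [h1]
      _ = ((2 * g + 1) * Nat.choose (2 * g) g) * g := by ring
      _ = (Nat.choose (2 * g + 1) (g + 1) * (g + 1)) * g := by rw [h2]
      _ = (g * Nat.choose (2 * g + 1) g) * (g + 1) := by rw [h3]; ring
  exact Nat.eq_of_mul_eq_mul_right (by omega) key

lemma choose_id2 (g : ℕ) :
    Nat.choose (2 * g + 2) (g + 1) = 2 * Nat.choose (2 * g + 1) g := by
  have h3 : Nat.choose (2 * g + 1) (g + 1) = Nat.choose (2 * g + 1) g := by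
    have := Nat.choose_symm (show g ≤ 2 * g + 1 from by omega)
    simpa [show 2 * g + 1 - g = g + 1 from by omega] using this
  have h4 := Nat.choose_succ_succ (2 * g + 1) g
  simp only [Nat.succ_eq_add_one, show 2 * g + 1 + 1 = 2 * g + 2 from by ring] at h4
  omega

set_option maxHeartbeats 2000000 in
lemma final_algebra (g : ℕ) (hg : 1 ≤ g) (lam : ℕ → ℂ) (x : ℂ) :
    2 * (Nat.choose (2 * g) (g + 1) : ℂ) *
        (∑ k ∈ Finset.range (2 * g + 3),
          lam k * ((k : ℂ) * ((k - 1 : ℕ) : ℂ)) * x ^ (k - 1 - 1))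
      - (2 * (Nat.choose (2 * g + 1) g : ℂ)) *
        ((2 * lam (2 * g + 2) * x ^ (g + 1)) * ((g + 1 : ℕ) : ℂ) * ((g + 1 - 1 : ℕ) : ℂ)
            * x ^ (g + 1 - 1 - 1)
          + ∑ k ∈ Finset.range (g + 1),
            ((x ^ k * (2 * lam (2 * k) + x * lam (2 * k + 1))) * ((k : ℕ) : ℂ)
                * ((k - 1 : ℕ) : ℂ) * x ^ (k - 1 - 1)
              + (x ^ k * lam (2 * k + 1)) * ((k + 1 : ℕ) : ℂ) * ((k + 1 - 1 : ℕ) : ℂ)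
                * x ^ (k + 1 - 1 - 1)))
    = 4 * ∑ k ∈ Finset.Icc 2 (2 * g),
        ((Nat.choose (2 * g + 1) g : ℂ) / (4 * (g : ℂ) + 2)) *
          ((k : ℂ) * (2 * (g : ℂ) + 2 - (k : ℂ)) / 2
            + ((2 * (g : ℂ) + 1) / 4) * ((-1 : ℂ) ^ k - 1)) * lam k * x ^ (k - 2) := by
  have h42 : (4 : ℂ) * (g : ℂ) + 2 ≠ 0 := by
    have h : ((4 * g + 2 : ℕ) : ℂ) ≠ 0 := Nat.cast_ne_zero.mpr (by omega)
    push_cast at h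
    exact h
  have h2g1 : (2 : ℂ) * (g : ℂ) + 1 ≠ 0 := by
    have h : ((2 * g + 1 : ℕ) : ℂ) ≠ 0 := Nat.cast_ne_zero.mpr (by omega)
    push_cast at h
    exact h
  have hc2eq : (Nat.choose (2 * g) (g + 1) : ℂ)
      = (g : ℂ) * (Nat.choose (2 * g + 1) g : ℂ) / (2 * (g : ℂ) + 1) := by
    have h := congrArg (Nat.cast : ℕ → ℂ) (choose_id1 g)
    push_cast at h
    rw [eq_div_iff h2g1]
    linear_combination h
  -- extend Icc sum to range
  have hR : ∑ k ∈ Finset.Icc 2 (2 * g), ((Nat.choose (2 * g + 1) g : ℂ) / (4 * (g : ℂ) + 2)) * (((k : ℕ) : ℂ) * (2 * (g : ℂ) + 2 - ((k : ℕ) : ℂ)) / 2 + ((2 * (g : ℂ) + 1) / 4) * ((-1 : ℂ) ^ (k) - 1)) * lam (k) * x ^ ((k) - 2)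
      = ∑ k ∈ Finset.range (2 * g + 3), ((Nat.choose (2 * g + 1) g : ℂ) / (4 * (g : ℂ) + 2)) * (((k : ℕ) : ℂ) * (2 * (g : ℂ) + 2 - ((k : ℕ) : ℂ)) / 2 + ((2 * (g : ℂ) + 1) / 4) * ((-1 : ℂ) ^ (k) - 1)) * lam (k) * x ^ ((k) - 2) := by
    apply Finset.sum_subset
    · intro k hk
      rw [Finset.mem_Icc] at hk
      rw [Finset.mem_range]
      omega
    · intro k hk hk'
      rw [Finset.mem_range] at hk
      rw [Finset.mem_Icc] at hk'
      have hcases : k = 0 ∨ k = 1 ∨ k = 2 * g + 1 ∨ k = 2 * g + 2 := by omega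
      rcases hcases with rfl | rfl | rfl | rfl
      · norm_num
      · norm_num
        left; right; ring
      · have hpow : (-1 : ℂ) ^ (2 * g + 1) = -1 := by
          rw [pow_succ, pow_mul]
          norm_num
        rw [hpow]
        push_cast
        ring_nf
      · have hpow : (-1 : ℂ) ^ (2 * g + 2) = 1 := by
          rw [show 2 * g + 2 = 2 * (g + 1) from by ring, pow_mul]
          norm_num
        rw [hpow]
        push_cast
        ring_nf
  have hparT : ∑ k ∈ Finset.range (2 * g + 3),
        lam k * ((k : ℂ) * ((k - 1 : ℕ) : ℂ)) * x ^ (k - 1 - 1)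
      = ∑ m ∈ Finset.range (g + 1 + 1), lam (2 * m) * (((2 * m : ℕ) : ℂ) * ((2 * m - 1 : ℕ) : ℂ)) * x ^ (2 * m - 1 - 1)
        + ∑ m ∈ Finset.range (g + 1), lam (2 * m + 1) * (((2 * m + 1 : ℕ) : ℂ) * ((2 * m + 1 - 1 : ℕ) : ℂ)) * x ^ (2 * m + 1 - 1 - 1) := by
    have h := sum_range_parity (g + 1)
      (fun k => lam k * ((k : ℂ) * ((k - 1 : ℕ) : ℂ)) * x ^ (k - 1 - 1))
    rw [show 2 * (g + 1) + 1 = 2 * g + 3 from by ring] at h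
    exact h
  have hparR : ∑ k ∈ Finset.range (2 * g + 3), ((Nat.choose (2 * g + 1) g : ℂ) / (4 * (g : ℂ) + 2)) * (((k : ℕ) : ℂ) * (2 * (g : ℂ) + 2 - ((k : ℕ) : ℂ)) / 2 + ((2 * (g : ℂ) + 1) / 4) * ((-1 : ℂ) ^ (k) - 1)) * lam (k) * x ^ ((k) - 2)
      = ∑ m ∈ Finset.range (g + 1 + 1), ((Nat.choose (2 * g + 1) g : ℂ) / (4 * (g : ℂ) + 2)) * (((2 * m : ℕ) : ℂ) * (2 * (g : ℂ) + 2 - ((2 * m : ℕ) : ℂ)) / 2 + ((2 * (g : ℂ) + 1) / 4) * ((-1 : ℂ) ^ (2 * m) - 1)) * lam (2 * m) * x ^ ((2 * m) - 2)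
        + ∑ m ∈ Finset.range (g + 1), ((Nat.choose (2 * g + 1) g : ℂ) / (4 * (g : ℂ) + 2)) * (((2 * m + 1 : ℕ) : ℂ) * (2 * (g : ℂ) + 2 - ((2 * m + 1 : ℕ) : ℂ)) / 2 + ((2 * (g : ℂ) + 1) / 4) * ((-1 : ℂ) ^ (2 * m + 1) - 1)) * lam (2 * m + 1) * x ^ ((2 * m + 1) - 2) := by
    have h := sum_range_parity (g + 1)
      (fun k => ((Nat.choose (2 * g + 1) g : ℂ) / (4 * (g : ℂ) + 2)) * (((k : ℕ) : ℂ) * (2 * (g : ℂ) + 2 - ((k : ℕ) : ℂ)) / 2 + ((2 * (g : ℂ) + 1) / 4) * ((-1 : ℂ) ^ (k) - 1)) * lam (k) * x ^ ((k) - 2))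
    rw [show 2 * (g + 1) + 1 = 2 * g + 3 from by ring] at h
    exact h
  have hterm : ∀ m ∈ Finset.range (g + 1),
      (2 * (Nat.choose (2 * g) (g + 1) : ℂ) * (lam (2 * m) * (((2 * m : ℕ) : ℂ) * ((2 * m - 1 : ℕ) : ℂ)) * x ^ (2 * m - 1 - 1))
        + 2 * (Nat.choose (2 * g) (g + 1) : ℂ) * (lam (2 * m + 1) * (((2 * m + 1 : ℕ) : ℂ) * ((2 * m + 1 - 1 : ℕ) : ℂ)) * x ^ (2 * m + 1 - 1 - 1)))
        - 2 * (Nat.choose (2 * g + 1) g : ℂ) * ((x ^ m * (2 * lam (2 * m) + x * lam (2 * m + 1))) * ((m : ℕ) : ℂ) * ((m - 1 : ℕ) : ℂ) * x ^ (m - 1 - 1) + (x ^ m * lam (2 * m + 1)) * ((m + 1 : ℕ) : ℂ) * ((m + 1 - 1 : ℕ) : ℂ) * x ^ (m + 1 - 1 - 1))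
      = 4 * (((Nat.choose (2 * g + 1) g : ℂ) / (4 * (g : ℂ) + 2)) * (((2 * m : ℕ) : ℂ) * (2 * (g : ℂ) + 2 - ((2 * m : ℕ) : ℂ)) / 2 + ((2 * (g : ℂ) + 1) / 4) * ((-1 : ℂ) ^ (2 * m) - 1)) * lam (2 * m) * x ^ ((2 * m) - 2)) + 4 * (((Nat.choose (2 * g + 1) g : ℂ) / (4 * (g : ℂ) + 2)) * (((2 * m + 1 : ℕ) : ℂ) * (2 * (g : ℂ) + 2 - ((2 * m + 1 : ℕ) : ℂ)) / 2 + ((2 * (g : ℂ) + 1) / 4) * ((-1 : ℂ) ^ (2 * m + 1) - 1)) * lam (2 * m + 1) * x ^ ((2 * m + 1) - 2)) := by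
    intro m _
    have hpow1 : (-1 : ℂ) ^ (2 * m) = 1 := by rw [pow_mul]; norm_num
    have hpow2 : (-1 : ℂ) ^ (2 * m + 1) = -1 := by rw [pow_succ, hpow1]; ring
    rw [hpow1, hpow2, hc2eq]
    match m with
    | 0 =>
      norm_num
      field_simp
      try ring
      try tauto
    | 1 =>
      rw [show (4 * (g : ℂ) + 2) = 2 * (2 * g + 1) by ring]
      norm_num
      field_simp
      try ring
      try tauto
    | (p + 2) =>
      rw [show (4 * (g : ℂ) + 2) = 2 * (2 * g + 1) by ring]
      simp only [show 2 * (p + 2) - 1 - 1 = 2 * p + 2 from by omega,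
        show 2 * (p + 2) - 1 = 2 * p + 3 from by omega,
        show 2 * (p + 2) + 1 - 1 = 2 * p + 4 from by omega,
        show 2 * (p + 2) + 1 - 1 - 1 = 2 * p + 3 from by omega,
        show p + 2 - 1 = p + 1 from by omega,
        show p + 2 - 1 - 1 = p from by omega,
        show p + 2 + 1 - 1 = p + 2 from by omega,
        show p + 2 + 1 - 1 - 1 = p + 1 from by omega,
        show 2 * (p + 2) - 2 = 2 * p + 2 from by omega,
        show 2 * (p + 2) + 1 - 2 = 2 * p + 3 from by omega]
      push_cast
      field_simp
      ring
  have hkey := Finset.sum_congr rfl hterm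
  rw [Finset.sum_sub_distrib, Finset.sum_add_distrib, Finset.sum_add_distrib,
    ← Finset.mul_sum, ← Finset.mul_sum, ← Finset.mul_sum, ← Finset.mul_sum,
    ← Finset.mul_sum] at hkey
  have htop : 2 * (Nat.choose (2 * g) (g + 1) : ℂ) *
        (lam (2 * g + 2) * (((2 * g + 2 : ℕ) : ℂ) * ((2 * g + 2 - 1 : ℕ) : ℂ))
          * x ^ (2 * g + 2 - 1 - 1))
      - 2 * (Nat.choose (2 * g + 1) g : ℂ) *
        ((2 * lam (2 * g + 2) * x ^ (g + 1)) * ((g + 1 : ℕ) : ℂ) * ((g + 1 - 1 : ℕ) : ℂ)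
          * x ^ (g + 1 - 1 - 1))
      = 4 * (((Nat.choose (2 * g + 1) g : ℂ) / (4 * (g : ℂ) + 2)) * (((2 * g + 2 : ℕ) : ℂ) * (2 * (g : ℂ) + 2 - ((2 * g + 2 : ℕ) : ℂ)) / 2 + ((2 * (g : ℂ) + 1) / 4) * ((-1 : ℂ) ^ (2 * g + 2) - 1)) * lam (2 * g + 2) * x ^ ((2 * g + 2) - 2)) := by
    have hpow : (-1 : ℂ) ^ (2 * g + 2) = 1 := by
      rw [show 2 * g + 2 = 2 * (g + 1) from by ring, pow_mul]
      norm_num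
    rw [hpow, hc2eq]
    obtain ⟨q, rfl⟩ : ∃ q, g = q + 1 := ⟨g - 1, by omega⟩
    push_cast at h42 h2g1
    simp only [show 2 * (q + 1) + 2 - 1 - 1 = 2 * q + 2 from by omega,
      show 2 * (q + 1) + 2 - 1 = 2 * q + 3 from by omega,
      show q + 1 + 1 - 1 - 1 = q from by omega,
      show q + 1 + 1 - 1 = q + 1 from by omega,
      show 2 * (q + 1) + 2 - 2 = 2 * q + 2 from by omega]
    push_cast
    field_simp
    ring
  rw [hR, hparT, hparR,
    Finset.sum_range_succ (fun m => lam (2 * m) * (((2 * m : ℕ) : ℂ) * ((2 * m - 1 : ℕ) : ℂ)) * x ^ (2 * m - 1 - 1)) (g + 1),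
    Finset.sum_range_succ (fun m => ((Nat.choose (2 * g + 1) g : ℂ) / (4 * (g : ℂ) + 2)) * (((2 * m : ℕ) : ℂ) * (2 * (g : ℂ) + 2 - ((2 * m : ℕ) : ℂ)) / 2 + ((2 * (g : ℂ) + 1) / 4) * ((-1 : ℂ) ^ (2 * m) - 1)) * lam (2 * m) * x ^ ((2 * m) - 2)) (g + 1)]
  simp only [show 2 * (g + 1) = 2 * g + 2 from by ring]
  linear_combination hkey + htop

/-- With `f(x) = ∏ (x − e_m) = ∑ λ_k x^k`, Kleinian 2-polar `F`, and for each
`(g+1)`-subset `S` the partition matrix `Λ^{[S]}` (symmetric, with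
`P_S(x)P_{S^c}(z) + P_S(z)P_{S^c}(x) − F(x,z) = (x−z)² ∑ Λ^{[S]}_{ij} x^{i−1}z^{j−1}`),
one has `∑_S ∑_{i,j} Λ^{[S]}_{ij} x^{i+j−2} = 2 ∑_{k=2}^{2g} Σ_{g;k} λ_k x^{k−2}` with
`Σ_{g;k} = (C(2g+1,g)/(4g+2))(k(2g+2−k)/2 + ((2g+1)/4)((−1)^k−1))`; equivalently every
`(k−1)`-th anti-diagonal sum of `Λ_g = (1/2)∑_S Λ^{[S]}` equals `Σ_{g;k} λ_k`. -/
theorem antidiagonal_sums_of_residual_matrix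
    (g : ℕ) (hg : 1 ≤ g) (e : Fin (2 * g + 2) → ℂ)
    (lam : ℕ → ℂ)
    (hlam : ∀ x : ℂ, ∏ m, (x - e m) = ∑ k ∈ Finset.range (2 * g + 3), lam k * x ^ k)
    (F : ℂ → ℂ → ℂ)
    (hF : ∀ x z : ℂ, F x z = 2 * lam (2 * g + 2) * x ^ (g + 1) * z ^ (g + 1)
        + ∑ k ∈ Finset.range (g + 1),
            x ^ k * z ^ k * (2 * lam (2 * k) + (x + z) * lam (2 * k + 1)))
    (L : Finset (Fin (2 * g + 2)) → Matrix (Fin g) (Fin g) ℂ)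
    (hLsymm : ∀ S ∈ Finset.powersetCard (g + 1) (Finset.univ : Finset (Fin (2 * g + 2))),
        (L S).IsSymm)
    (hL : ∀ S ∈ Finset.powersetCard (g + 1) (Finset.univ : Finset (Fin (2 * g + 2))),
        ∀ x z : ℂ,
        (∏ i ∈ S, (x - e i)) * (∏ j ∈ Sᶜ, (z - e j))
          + (∏ i ∈ S, (z - e i)) * (∏ j ∈ Sᶜ, (x - e j)) - F x z
        = (x - z) ^ 2 * ∑ i, ∑ j, L S i j * x ^ (i : ℕ) * z ^ (j : ℕ)) :
    (∀ x : ℂ,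
      ∑ S ∈ Finset.powersetCard (g + 1) (Finset.univ : Finset (Fin (2 * g + 2))),
          ∑ i, ∑ j, L S i j * x ^ ((i : ℕ) + (j : ℕ))
        = 2 * ∑ k ∈ Finset.Icc 2 (2 * g),
            ((Nat.choose (2 * g + 1) g : ℂ) / (4 * (g : ℂ) + 2)) *
              ((k : ℂ) * (2 * (g : ℂ) + 2 - (k : ℂ)) / 2
                + ((2 * (g : ℂ) + 1) / 4) * ((-1 : ℂ) ^ k - 1)) * lam k * x ^ (k - 2))
    ∧ (∀ k : ℕ, 2 ≤ k → k ≤ 2 * g →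
        (1 / 2 : ℂ) *
            ∑ S ∈ Finset.powersetCard (g + 1) (Finset.univ : Finset (Fin (2 * g + 2))),
              ∑ i : Fin g, ∑ j : Fin g, (if (i : ℕ) + (j : ℕ) + 2 = k then L S i j else 0)
          = ((Nat.choose (2 * g + 1) g : ℂ) / (4 * (g : ℂ) + 2)) *
              ((k : ℂ) * (2 * (g : ℂ) + 2 - (k : ℂ)) / 2
                + ((2 * (g : ℂ) + 1) / 4) * ((-1 : ℂ) ^ k - 1)) * lam k) := by
  classical
  have part1 : ∀ x : ℂ,
      ∑ S ∈ Finset.powersetCard (g + 1) (Finset.univ : Finset (Fin (2 * g + 2))),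
          ∑ i, ∑ j, L S i j * x ^ ((i : ℕ) + (j : ℕ))
        = 2 * ∑ k ∈ Finset.Icc 2 (2 * g),
            ((Nat.choose (2 * g + 1) g : ℂ) / (4 * (g : ℂ) + 2)) *
              ((k : ℂ) * (2 * (g : ℂ) + 2 - (k : ℂ)) / 2
                + ((2 * (g : ℂ) + 1) / 4) * ((-1 : ℂ) ^ k - 1)) * lam k * x ^ (k - 2) := by
    intro x
    set P := Finset.powersetCard (g + 1) (Finset.univ : Finset (Fin (2 * g + 2))) with hPdef
    set Fz : Polynomial ℂ :=
      C (2 * lam (2 * g + 2) * x ^ (g + 1)) * X ^ (g + 1)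
        + ∑ k ∈ Finset.range (g + 1),
            (C (x ^ k * (2 * lam (2 * k) + x * lam (2 * k + 1))) * X ^ k
              + C (x ^ k * lam (2 * k + 1)) * X ^ (k + 1)) with hFzdef
    set Ψ : Polynomial ℂ :=
      ∑ S ∈ P, ∑ i, ∑ j, C (L S i j * x ^ (i : ℕ)) * X ^ (j : ℕ) with hΨdef
    set Φ : Polynomial ℂ :=
      (∑ S ∈ P, (C (∏ i ∈ S, (x - e i)) * ∏ j ∈ Sᶜ, (X - C (e j))
        + C (∏ j ∈ Sᶜ, (x - e j)) * ∏ i ∈ S, (X - C (e i))))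
        - C (P.card : ℂ) * Fz with hΦdef
    have hFzeval : ∀ z : ℂ, Fz.eval z = F x z := by
      intro z
      rw [hF, hFzdef]
      simp only [eval_add, eval_mul, eval_pow, eval_C, eval_X, eval_finset_sum]
      rw [Finset.sum_congr rfl (fun k (_ : k ∈ Finset.range (g + 1)) => by
        ring : ∀ k ∈ Finset.range (g + 1),
          x ^ k * (2 * lam (2 * k) + x * lam (2 * k + 1)) * z ^ k
            + x ^ k * lam (2 * k + 1) * z ^ (k + 1)
          = x ^ k * z ^ k * (2 * lam (2 * k) + (x + z) * lam (2 * k + 1)))]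
    have hPhiPsi : Φ = (X - C x) ^ 2 * Ψ := by
      apply Polynomial.funext
      intro z
      have hsum : ∀ S ∈ P, (∏ i ∈ S, (x - e i)) * (∏ j ∈ Sᶜ, (z - e j))
          + (∏ i ∈ S, (z - e i)) * (∏ j ∈ Sᶜ, (x - e j))
          = F x z + (x - z) ^ 2 * ∑ i, ∑ j, L S i j * x ^ (i : ℕ) * z ^ (j : ℕ) := by
        intro S hS
        linear_combination hL S hS x z
      have lhs_eval : Φ.eval z = (∑ S ∈ P, ((∏ i ∈ S, (x - e i)) * (∏ j ∈ Sᶜ, (z - e j))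
          + (∏ i ∈ S, (z - e i)) * (∏ j ∈ Sᶜ, (x - e j)))) - (P.card : ℂ) * F x z := by
        rw [hΦdef]
        simp only [eval_sub, eval_mul, eval_C, eval_finset_sum, eval_add, eval_prod, eval_sub,
          eval_X, hFzeval z]
        congr 1
        apply Finset.sum_congr rfl
        intro S _
        ring
      rw [lhs_eval, Finset.sum_congr rfl hsum, Finset.sum_add_distrib, Finset.sum_const,
        nsmul_eq_mul]
      rw [eval_mul, eval_pow, eval_sub, eval_X, eval_C, hΨdef]
      simp only [eval_finset_sum, eval_mul, eval_C, eval_pow, eval_X]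
      have : ∑ S ∈ P, (x - z) ^ 2 * ∑ i, ∑ j, L S i j * x ^ (i : ℕ) * z ^ (j : ℕ)
          = (z - x) ^ 2 * ∑ S ∈ P, ∑ i, ∑ j, L S i j * x ^ (i : ℕ) * z ^ (j : ℕ) := by
        rw [Finset.mul_sum]
        apply Finset.sum_congr rfl
        intro S _
        ring
      rw [this]
      have hinner : ∀ S ∈ P, (∑ i, ∑ j, (L S i j * x ^ (i : ℕ)) * z ^ (j : ℕ))
          = ∑ i, ∑ j, L S i j * x ^ (i : ℕ) * z ^ (j : ℕ) := by
        intro S _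
        apply Finset.sum_congr rfl
        intro i _
        apply Finset.sum_congr rfl
        intro j _
        ring
      rw [Finset.sum_congr rfl hinner]
      ring
    have hPsiX : 2 * Ψ.eval x = (Polynomial.derivative (Polynomial.derivative Φ)).eval x := by
      rw [hPhiPsi]
      simp only [derivative_mul, derivative_pow, derivative_sub, derivative_X, derivative_C,
        sub_zero, mul_one, derivative_add]
      simp only [eval_add, eval_mul, eval_sub, eval_C, eval_X, eval_pow, eval_one,
        Polynomial.eval_natCast, Nat.cast_ofNat]
      ring
    have hLHS : ∑ S ∈ P, ∑ i, ∑ j, L S i j * x ^ ((i : ℕ) + (j : ℕ)) = Ψ.eval x := by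
      rw [hΨdef]
      simp only [eval_finset_sum, eval_mul, eval_C, eval_pow, eval_X]
      apply Finset.sum_congr rfl
      intro S _
      apply Finset.sum_congr rfl
      intro i _
      apply Finset.sum_congr rfl
      intro j _
      rw [pow_add]
      ring
    have hD2 : (Polynomial.derivative (Polynomial.derivative Φ)).eval x
        = 2 * (Nat.choose (2 * g) (g + 1) : ℂ) *
            (∑ k ∈ Finset.range (2 * g + 3),
              lam k * ((k : ℂ) * ((k - 1 : ℕ) : ℂ)) * x ^ (k - 1 - 1))
          - (P.card : ℂ) *
            ((2 * lam (2 * g + 2) * x ^ (g + 1)) * ((g + 1 : ℕ) : ℂ) * ((g + 1 - 1 : ℕ) : ℂ)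
                * x ^ (g + 1 - 1 - 1)
              + ∑ k ∈ Finset.range (g + 1),
                ((x ^ k * (2 * lam (2 * k) + x * lam (2 * k + 1))) * ((k : ℕ) : ℂ)
                    * ((k - 1 : ℕ) : ℂ) * x ^ (k - 1 - 1)
                  + (x ^ k * lam (2 * k + 1)) * ((k + 1 : ℕ) : ℂ) * ((k + 1 - 1 : ℕ) : ℂ)
                    * x ^ (k + 1 - 1 - 1))) := by
      have hfpoly : (∏ m, (X - C (e m)) : Polynomial ℂ)
          = ∑ k ∈ Finset.range (2 * g + 3), C (lam k) * X ^ k := by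
        apply Polynomial.funext
        intro r
        simp only [eval_prod, eval_sub, eval_X, eval_C, eval_finset_sum, eval_mul, eval_pow]
        exact hlam r
      have huniv : ∑ a, ∑ b ∈ (Finset.univ : Finset (Fin (2 * g + 2))).erase a,
            ∏ k ∈ (((Finset.univ : Finset (Fin (2 * g + 2))).erase a).erase b), (x - e k)
          = ∑ k ∈ Finset.range (2 * g + 3),
              lam k * ((k : ℂ) * ((k - 1 : ℕ) : ℂ)) * x ^ (k - 1 - 1) := by
        rw [← eval_d2_prod e Finset.univ x, hfpoly, derivative_sum, derivative_sum]
        simp only [d2_C_mul_X_pow, eval_finset_sum, eval_mul, eval_C, eval_pow, eval_X]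
        apply Finset.sum_congr rfl
        intro k _
        ring
      have hFzD2 : (Polynomial.derivative (Polynomial.derivative Fz)).eval x
          = (2 * lam (2 * g + 2) * x ^ (g + 1)) * ((g + 1 : ℕ) : ℂ) * ((g + 1 - 1 : ℕ) : ℂ)
                * x ^ (g + 1 - 1 - 1)
              + ∑ k ∈ Finset.range (g + 1),
                ((x ^ k * (2 * lam (2 * k) + x * lam (2 * k + 1))) * ((k : ℕ) : ℂ)
                    * ((k - 1 : ℕ) : ℂ) * x ^ (k - 1 - 1)
                  + (x ^ k * lam (2 * k + 1)) * ((k + 1 : ℕ) : ℂ) * ((k + 1 - 1 : ℕ) : ℂ)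
                    * x ^ (k + 1 - 1 - 1)) := by
        rw [hFzdef]
        simp only [derivative_add, derivative_sum, d2_C_mul_X_pow, eval_add, eval_finset_sum,
          eval_mul, eval_C, eval_pow, eval_X]
      have expand : (Polynomial.derivative (Polynomial.derivative Φ)).eval x
          = ∑ S ∈ P, ((∏ i ∈ S, (x - e i)) *
              (∑ a ∈ Sᶜ, ∑ b ∈ Sᶜ.erase a, ∏ k ∈ (Sᶜ.erase a).erase b, (x - e k))
            + (∏ j ∈ Sᶜ, (x - e j)) *
              (∑ a ∈ S, ∑ b ∈ S.erase a, ∏ k ∈ (S.erase a).erase b, (x - e k)))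
            - (P.card : ℂ) * (Polynomial.derivative (Polynomial.derivative Fz)).eval x := by
        rw [hΦdef]
        simp only [derivative_sub, derivative_sum, derivative_add, derivative_C_mul]
        simp only [eval_sub, eval_finset_sum, eval_add, eval_mul, eval_C, eval_d2_prod]
      have hcompl : ∑ S ∈ P, (∏ j ∈ Sᶜ, (x - e j)) *
            (∑ a ∈ S, ∑ b ∈ S.erase a, ∏ k ∈ (S.erase a).erase b, (x - e k))
          = ∑ S ∈ P, (∏ i ∈ S, (x - e i)) *
            (∑ a ∈ Sᶜ, ∑ b ∈ Sᶜ.erase a, ∏ k ∈ (Sᶜ.erase a).erase b, (x - e k)) := by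
        apply Finset.sum_nbij' (fun S => Sᶜ) (fun S => Sᶜ)
        · intro S hS
          rw [hPdef, Finset.mem_powersetCard] at hS ⊢
          refine ⟨Finset.subset_univ _, ?_⟩
          rw [Finset.card_compl, hS.2, Fintype.card_fin]
          omega
        · intro S hS
          rw [hPdef, Finset.mem_powersetCard] at hS ⊢
          refine ⟨Finset.subset_univ _, ?_⟩
          rw [Finset.card_compl, hS.2, Fintype.card_fin]
          omega
        · intro S _
          exact compl_compl S
        · intro S _
          exact compl_compl S
        · intro S _
          rw [compl_compl]
      have hswap := swap_count e x (g + 1)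
      rw [Fintype.card_fin, show 2 * g + 2 - 2 = 2 * g from by omega, ← hPdef] at hswap
      rw [expand, Finset.sum_add_distrib, hcompl, hswap, huniv, hFzD2]
      ring
    have hcardP : ((P.card : ℕ) : ℂ) = 2 * (Nat.choose (2 * g + 1) g : ℂ) := by
      rw [hPdef, Finset.card_powersetCard, Finset.card_univ, Fintype.card_fin, choose_id2]
      push_cast; ring
    have hfinal : 2 * (Nat.choose (2 * g) (g + 1) : ℂ) *
            (∑ k ∈ Finset.range (2 * g + 3),
              lam k * ((k : ℂ) * ((k - 1 : ℕ) : ℂ)) * x ^ (k - 1 - 1))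
          - (2 * (Nat.choose (2 * g + 1) g : ℂ)) *
            ((2 * lam (2 * g + 2) * x ^ (g + 1)) * ((g + 1 : ℕ) : ℂ) * ((g + 1 - 1 : ℕ) : ℂ)
                * x ^ (g + 1 - 1 - 1)
              + ∑ k ∈ Finset.range (g + 1),
                ((x ^ k * (2 * lam (2 * k) + x * lam (2 * k + 1))) * ((k : ℕ) : ℂ)
                    * ((k - 1 : ℕ) : ℂ) * x ^ (k - 1 - 1)
                  + (x ^ k * lam (2 * k + 1)) * ((k + 1 : ℕ) : ℂ) * ((k + 1 - 1 : ℕ) : ℂ)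
                    * x ^ (k + 1 - 1 - 1)))
        = 4 * ∑ k ∈ Finset.Icc 2 (2 * g),
            ((Nat.choose (2 * g + 1) g : ℂ) / (4 * (g : ℂ) + 2)) *
              ((k : ℂ) * (2 * (g : ℂ) + 2 - (k : ℂ)) / 2
                + ((2 * (g : ℂ) + 1) / 4) * ((-1 : ℂ) ^ k - 1)) * lam k * x ^ (k - 2) :=
      final_algebra g hg lam x
    rw [hLHS]
    rw [hcardP] at hD2
    have h2 := hPsiX.trans (hD2.trans hfinal)
    linear_combination (1/2) * h2
  refine ⟨part1, ?_⟩
  intro k hk2 hk2g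
  set P := Finset.powersetCard (g + 1) (Finset.univ : Finset (Fin (2 * g + 2))) with hPdef
  set A : Polynomial ℂ :=
    ∑ S ∈ P, ∑ i : Fin g, ∑ j : Fin g, C (L S i j) * X ^ ((i : ℕ) + (j : ℕ)) with hAdef
  set B : Polynomial ℂ :=
    C 2 * ∑ k' ∈ Finset.Icc 2 (2 * g), C (((Nat.choose (2 * g + 1) g : ℂ) / (4 * (g : ℂ) + 2)) * (((k' : ℕ) : ℂ) * (2 * (g : ℂ) + 2 - ((k' : ℕ) : ℂ)) / 2 + ((2 * (g : ℂ) + 1) / 4) * ((-1 : ℂ) ^ (k') - 1)) * lam (k') ) * X ^ (k' - 2) with hBdef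
  have hAB : A = B := by
    apply Polynomial.funext
    intro r
    rw [hAdef, hBdef]
    simp only [eval_finset_sum, eval_mul, eval_C, eval_pow, eval_X]
    exact part1 r
  have hA : A.coeff (k - 2) = ∑ S ∈ P, ∑ i : Fin g, ∑ j : Fin g,
      (if (i : ℕ) + (j : ℕ) + 2 = k then L S i j else 0) := by
    rw [hAdef]
    simp only [Polynomial.finset_sum_coeff, Polynomial.coeff_C_mul, Polynomial.coeff_X_pow,
      mul_ite, mul_one, mul_zero]
    refine Finset.sum_congr rfl fun S _ => Finset.sum_congr rfl fun i _ =>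
      Finset.sum_congr rfl fun j _ => ?_
    exact if_congr (by omega) rfl rfl
  have hB : B.coeff (k - 2)
      = 2 * ((((Nat.choose (2 * g + 1) g : ℂ) / (4 * (g : ℂ) + 2)) * (((k : ℕ) : ℂ) * (2 * (g : ℂ) + 2 - ((k : ℕ) : ℂ)) / 2 + ((2 * (g : ℂ) + 1) / 4) * ((-1 : ℂ) ^ (k) - 1)) * lam (k))) := by
    rw [hBdef, Polynomial.coeff_C_mul]
    simp only [Polynomial.finset_sum_coeff, Polynomial.coeff_C_mul, Polynomial.coeff_X_pow,
      mul_ite, mul_one, mul_zero]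
    rw [Finset.sum_eq_single_of_mem k (Finset.mem_Icc.mpr ⟨hk2, hk2g⟩)]
    · rw [if_pos rfl]
    · intro b hb hbk
      rw [Finset.mem_Icc] at hb
      rw [if_neg (by omega)]
  have := hA.symm.trans ((congrArg (fun p : Polynomial ℂ => p.coeff (k - 2)) hAB).trans hB)
  rw [this]
  ring
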